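/- arXiv:1105.6017 — 4 statements merged into one kernel-verified Lean document; each statement's English description precedes it below -/
import Mathlib

section
/- Let x_1, ..., x_n be linearly independent unit vectors in ℝ^n and let D = convexHull {0, x_1, ..., x_n}. For each i ∈ {1, ..., n} define the map T_i : D → ℝ^n by T_i(∑_{j=1}^n α_j x_j) = (1/2) ∑_{j=1}^n α_j x_j + (1/2)(∑_{j=1}^n α_j) x_i, where (α_1, ..., α_n) are the (unique) coefficients of a point of D in the basis x_1, ..., x_n. Then μ_n(D) ≤ 2^n ∑_{i=1}^n μ_n(T_i(D)). -/
open MeasureTheory Metric Set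

/-- Hyperbolic volume in the Klein model: Lebesgue measure with density
`x ↦ (1 - ‖x‖²)^{-(n+1)/2}`, restricted to the open unit ball. -/
noncomputable def hypVol (n : ℕ) : Measure (EuclideanSpace ℝ (Fin n)) :=
  (((volume : Measure (EuclideanSpace ℝ (Fin n)))).restrict (ball 0 1)).withDensity
    fun x => ENNReal.ofReal ((1 - ‖x‖ ^ 2) ^ (-((n : ℝ) + 1) / 2))

set_option maxHeartbeats 3000000 in
theorem volume_simplex_le_sum_cones (n : ℕ) (hn : 1 ≤ n)
    (x : Fin n → EuclideanSpace ℝ (Fin n))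
    (hunit : ∀ i, ‖x i‖ = 1) (hli : LinearIndependent ℝ x)
    (T : Fin n → EuclideanSpace ℝ (Fin n) → EuclideanSpace ℝ (Fin n))
    (hT : ∀ (i : Fin n) (α : Fin n → ℝ), (∀ j, 0 ≤ α j) → (∑ j, α j) ≤ 1 →
      T i (∑ j, α j • x j) =
        (1 / 2 : ℝ) • (∑ j, α j • x j) + ((1 / 2) * ∑ j, α j) • x i) :
    hypVol n (convexHull ℝ ({0} ∪ Set.range x)) ≤
      2 ^ n * ∑ i, hypVol n (T i '' convexHull ℝ ({0} ∪ Set.range x)) := by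
  classical
  haveI : Nonempty (Fin n) := ⟨⟨0, hn⟩⟩
  have hcard : Fintype.card (Fin n) = Module.finrank ℝ (EuclideanSpace ℝ (Fin n)) := by
    simp [finrank_euclideanSpace]
  let b : Module.Basis (Fin n) ℝ (EuclideanSpace ℝ (Fin n)) :=
    basisOfLinearIndependentOfCardEqFinrank hli hcard
  have hb : ⇑b = x := coe_basisOfLinearIndependentOfCardEqFinrank hli hcard
  let f : EuclideanSpace ℝ (Fin n) →ₗ[ℝ] ℝ := ∑ j, b.coord j
  have hf : ∀ y, f y = ∑ j, b.repr y j := by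
    intro y; simp [f, LinearMap.sum_apply, Module.Basis.coord_apply]
  have hfx : ∀ j, f (x j) = 1 := by
    intro j
    rw [hf, ← hb]
    simp [Module.Basis.repr_self, Finsupp.single_apply]
  set D : Set (EuclideanSpace ℝ (Fin n)) := convexHull ℝ ({0} ∪ Set.range x) with hD
  -- coefficients of points of D
  have hmem : ∀ y ∈ D, (∀ j, 0 ≤ b.repr y j) ∧ (∑ j, b.repr y j) ≤ 1 := by
    have hsub : D ⊆ {y | (∀ j, 0 ≤ b.repr y j) ∧ (∑ j, b.repr y j) ≤ 1} := by
      rw [hD]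
      apply convexHull_min
      · rintro z (hz | ⟨j, rfl⟩)
        · rcases hz with rfl
          simp
        · rw [← hb]
          constructor
          · intro j'
            simp [Module.Basis.repr_self, Finsupp.single_apply]
            split <;> norm_num
          · simp [Module.Basis.repr_self, Finsupp.single_apply]
      · rintro u hu v hv a c ha hc hac
        simp only [mem_setOf_eq] at hu hv ⊢
        have hrepr : ∀ j, b.repr (a • u + c • v) j = a * b.repr u j + c * b.repr v j := by
          intro j; simp [map_add, _root_.map_smul]
        constructor
        · intro j
          rw [hrepr]
          have := hu.1 j; have := hv.1 j
          positivity
        · simp only [hrepr, Finset.sum_add_distrib, ← Finset.mul_sum]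
          nlinarith [hu.2, hv.2]
    exact fun y hy => hsub hy
  have hrepr_eq : ∀ y : EuclideanSpace ℝ (Fin n), (∑ j, b.repr y j • x j) = y := by
    intro y
    conv_rhs => rw [← b.sum_repr y]
    simp [hb]
  -- the linear maps
  set L : Fin n → (EuclideanSpace ℝ (Fin n) →ₗ[ℝ] EuclideanSpace ℝ (Fin n)) :=
    fun i => (1/2 : ℝ) • (LinearMap.id + f.smulRight (x i)) with hL
  have hLdef : ∀ i y, L i y = (1/2 : ℝ) • (y + f y • x i) := by
    intro i y; simp [hL, LinearMap.smulRight_apply]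
  -- T agrees with L on D
  have hTL : ∀ i, ∀ y ∈ D, T i y = L i y := by
    intro i y hy
    obtain ⟨h0, h1⟩ := hmem y hy
    have := hT i (fun j => b.repr y j) h0 h1
    rw [hrepr_eq] at this
    rw [this, hLdef, hf, smul_add, smul_smul]
  -- determinant
  have hdet : ∀ i, LinearMap.det (L i) = (1/2 : ℝ)^n * 2 := by
    intro i
    have h1 : LinearMap.toMatrix b b (LinearMap.id + f.smulRight (x i)) =
        1 + Matrix.replicateCol (Fin 1) (Pi.single i (1:ℝ)) * Matrix.replicateRow (Fin 1) (fun _ => (1:ℝ)) := by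
      ext k j
      have : ((LinearMap.id + f.smulRight (x i)) :
          EuclideanSpace ℝ (Fin n) →ₗ[ℝ] EuclideanSpace ℝ (Fin n)) (b j) = b j + b i := by
        simp [LinearMap.smulRight_apply, hb, hfx]
      rw [LinearMap.toMatrix_apply, this]
      simp [Matrix.one_apply, Module.Basis.repr_self, Finsupp.single_apply, Matrix.mul_apply,
        Pi.single_apply, eq_comm]
    have h2 : LinearMap.det ((LinearMap.id + f.smulRight (x i)) :
        EuclideanSpace ℝ (Fin n) →ₗ[ℝ] EuclideanSpace ℝ (Fin n)) = 2 := by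
      rw [← LinearMap.det_toMatrix b, h1]
      erw [Matrix.det_one_add_replicateCol_mul_replicateRow]
      norm_num [dotProduct, Pi.single_apply]
    simp only [hL, LinearMap.det_smul, h2, ← hcard, Fintype.card_fin]
  have hdetne : ∀ i, LinearMap.det (L i) ≠ 0 := by
    intro i; rw [hdet i]; positivity
  -- density
  set ρ : EuclideanSpace ℝ (Fin n) → ENNReal :=
    fun z => ENNReal.ofReal ((1 - ‖z‖ ^ 2) ^ (-((n : ℝ) + 1) / 2)) with hρdef
  have hρmeas : Measurable ρ := by
    apply Measurable.ennreal_ofReal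
    exact (measurable_const.sub (measurable_norm.pow_const 2)).pow measurable_const
  have hexp : (-((n : ℝ) + 1) / 2) ≤ 0 := by
    have : (0:ℝ) ≤ (n:ℝ) + 1 := by positivity
    linarith
  -- basic facts for y ∈ D
  have hDfacts : ∀ y ∈ D, ‖y‖ ≤ ∑ j, b.repr y j ∧ f y = ∑ j, b.repr y j := by
    intro y hy
    obtain ⟨h0, h1⟩ := hmem y hy
    refine ⟨?_, hf y⟩
    calc ‖y‖ = ‖∑ j, b.repr y j • x j‖ := by rw [hrepr_eq]
      _ ≤ ∑ j, ‖b.repr y j • x j‖ := norm_sum_le _ _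
      _ = ∑ j, b.repr y j := by
          apply Finset.sum_congr rfl
          intro j _
          rw [norm_smul, hunit, mul_one, Real.norm_eq_abs, abs_of_nonneg (h0 j)]
  -- L i maps D ∩ ball into ball
  have hball : ∀ i, ∀ y ∈ D ∩ ball (0:EuclideanSpace ℝ (Fin n)) 1,
      L i y ∈ ball (0:EuclideanSpace ℝ (Fin n)) 1 := by
    rintro i y ⟨hyD, hyB⟩
    obtain ⟨h0, h1⟩ := hmem y hyD
    obtain ⟨hny, hfy⟩ := hDfacts y hyD
    rw [mem_ball_zero_iff] at hyB ⊢
    rw [hLdef]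
    have hnx : ‖f y • x i‖ ≤ 1 := by
      rw [norm_smul, hunit, mul_one, Real.norm_eq_abs, hfy,
        abs_of_nonneg (Finset.sum_nonneg fun j _ => h0 j)]
      exact h1
    calc ‖(1/2 : ℝ) • (y + f y • x i)‖ = (1/2) * ‖y + f y • x i‖ := by
          rw [norm_smul]; norm_num
      _ ≤ (1/2) * (‖y‖ + ‖f y • x i‖) := by
          have := norm_add_le y (f y • x i); linarith
      _ < 1 := by linarith
  -- pointwise density estimate
  have hpoint : ∀ y ∈ D ∩ ball (0:EuclideanSpace ℝ (Fin n)) 1, ρ y ≤ ∑ i, ρ (L i y) := by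
    rintro y ⟨hyD, hyB⟩
    obtain ⟨h0, h1⟩ := hmem y hyD
    obtain ⟨hny, hfy⟩ := hDfacts y hyD
    set s : ℝ := ∑ j, b.repr y j with hs
    have hs0 : 0 ≤ s := Finset.sum_nonneg fun j _ => h0 j
    -- choose the maximizing index
    obtain ⟨i, _, hi⟩ := Finset.exists_max_image Finset.univ
      (fun j => inner ℝ (x j) y : Fin n → ℝ) Finset.univ_nonempty
    have hinner : ‖y‖^2 ≤ s * inner ℝ (x i) y := by
      have haux : (inner ℝ (∑ j, b.repr y j • x j) y : ℝ) = ‖y‖^2 := by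
        rw [hrepr_eq, real_inner_self_eq_norm_sq]
      have hysum : ‖y‖^2 = ∑ j, b.repr y j * (inner ℝ (x j) y : ℝ) := by
        rw [← haux, sum_inner]
        exact Finset.sum_congr rfl fun j _ => real_inner_smul_left _ _ _
      rw [hysum, hs, Finset.sum_mul]
      exact Finset.sum_le_sum fun j _ =>
        mul_le_mul_of_nonneg_left (hi j (Finset.mem_univ j)) (h0 j)
    have hnormle : ‖y‖ ≤ ‖L i y‖ := by
      have hexpand : ‖y + s • x i‖^2 = ‖y‖^2 + 2 * (s * inner ℝ (x i) y) + s^2 := by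
        rw [norm_add_sq_real, real_inner_smul_right, norm_smul, hunit, mul_one,
          Real.norm_eq_abs, abs_of_nonneg hs0, real_inner_comm]
        try ring
      have h4 : (2 * ‖y‖)^2 ≤ ‖y + s • x i‖^2 := by
        rw [hexpand]
        nlinarith [hny, norm_nonneg y]
      have : 2 * ‖y‖ ≤ ‖y + s • x i‖ := by
        nlinarith [norm_nonneg (y + s • x i), norm_nonneg y]
      rw [hLdef, hfy, norm_smul, Real.norm_eq_abs]
      rw [abs_of_nonneg (by norm_num : (0:ℝ) ≤ 1/2)]
      linarith
    have hLiball : L i y ∈ ball (0:EuclideanSpace ℝ (Fin n)) 1 :=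
      hball i y ⟨hyD, hyB⟩
    rw [mem_ball_zero_iff] at hLiball
    have hρle : ρ y ≤ ρ (L i y) := by
      have hkey : ∀ A C : ℝ, 0 ≤ A → A ≤ C → C < 1 →
          (1 - A ^ 2) ^ (-((n : ℝ) + 1) / 2) ≤ (1 - C ^ 2) ^ (-((n : ℝ) + 1) / 2) := by
        intro A C hA0 hAC hC1
        apply Real.rpow_le_rpow_of_nonpos
        · nlinarith
        · nlinarith
        · exact hexp
      exact ENNReal.ofReal_le_ofReal
        (hkey ‖y‖ ‖L i y‖ (norm_nonneg y) hnormle hLiball)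
    calc ρ y ≤ ρ (L i y) := hρle
      _ ≤ ∑ i', ρ (L i' y) := Finset.single_le_sum (f := fun i' => ρ (L i' y)) (fun j _ => zero_le) (Finset.mem_univ i)
  -- measurability of sets
  have hDmeas : MeasurableSet D := by
    have : IsCompact D := by
      rw [hD]
      apply Set.Finite.isCompact_convexHull
      exact (finite_singleton _).union (finite_range x)
    exact this.isClosed.measurableSet
  have hsmeas : MeasurableSet (D ∩ ball (0:EuclideanSpace ℝ (Fin n)) 1) :=
    hDmeas.inter measurableSet_ball
  -- hypVol as an integral
  have hypVol_eq : ∀ A : Set (EuclideanSpace ℝ (Fin n)), MeasurableSet A →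
      hypVol n A = ∫⁻ z in A ∩ ball (0:EuclideanSpace ℝ (Fin n)) 1, ρ z ∂volume := by
    intro A hA
    rw [hypVol, withDensity_apply _ hA, Measure.restrict_restrict hA]
  -- the key estimate per i
  have key : ∀ i, ∫⁻ y in D ∩ ball (0:EuclideanSpace ℝ (Fin n)) 1, ρ (L i y) ∂volume ≤
      2 ^ n * hypVol n (T i '' D) := by
    intro i
    set e : EuclideanSpace ℝ (Fin n) ≃ₗ[ℝ] EuclideanSpace ℝ (Fin n) :=
      LinearMap.equivOfDetNeZero (L i) (hdetne i) with he
    have heL : ∀ y, e y = L i y := fun y => rfl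
    have hecont : Continuous (L i) := (L i).continuous_of_finiteDimensional
    have hesymm : Continuous (e.symm : EuclideanSpace ℝ (Fin n) → EuclideanSpace ℝ (Fin n)) :=
      (e.symm : EuclideanSpace ℝ (Fin n) →ₗ[ℝ] EuclideanSpace ℝ (Fin n)).continuous_of_finiteDimensional
    have himg : ∀ S : Set (EuclideanSpace ℝ (Fin n)), L i '' S = e.symm ⁻¹' S := by
      intro S
      rw [← e.image_eq_preimage_symm]
      rfl
    have himgD : MeasurableSet (L i '' D) := by
      rw [himg]; exact hDmeas.preimage hesymm.measurable
    have hs := hsmeas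
    have himgs : MeasurableSet (L i '' (D ∩ ball 0 1)) := by
      rw [himg]; exact hs.preimage hesymm.measurable
    have hinj : Function.Injective (L i) := e.injective
    have hmap : Measure.map (L i) volume =
        ENNReal.ofReal |(LinearMap.det (L i))⁻¹| • volume :=
      Measure.map_linearMap_addHaar_eq_smul_addHaar _ (hdetne i)
    have hchange : ∫⁻ y in D ∩ ball (0:EuclideanSpace ℝ (Fin n)) 1, ρ (L i y) ∂volume =
        ENNReal.ofReal |(LinearMap.det (L i))⁻¹| *
          ∫⁻ z in L i '' (D ∩ ball 0 1), ρ z ∂volume := by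
      rw [← lintegral_map hρmeas hecont.measurable]
      have hre : volume.restrict (D ∩ ball (0:EuclideanSpace ℝ (Fin n)) 1)
          = volume.restrict ((L i) ⁻¹' ((L i) '' (D ∩ ball 0 1))) := by
        rw [Function.Injective.preimage_image hinj]
      rw [hre, ← Measure.restrict_map hecont.measurable himgs, hmap,
        Measure.restrict_smul, lintegral_smul_measure, smul_eq_mul]
    rw [hchange]
    have himageT : T i '' D = L i '' D := Set.image_congr (hTL i)
    have hsubset : L i '' (D ∩ ball 0 1) ⊆ (L i '' D) ∩ ball 0 1 := by
      rintro _ ⟨y, hy, rfl⟩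
      exact ⟨⟨y, hy.1, rfl⟩, hball i y hy⟩
    have hint_le : ∫⁻ z in L i '' (D ∩ ball 0 1), ρ z ∂volume ≤ hypVol n (T i '' D) := by
      rw [himageT, hypVol_eq _ himgD]
      exact lintegral_mono_set hsubset
    have hcoef : ENNReal.ofReal |(LinearMap.det (L i))⁻¹| ≤ 2 ^ n := by
      rw [hdet i]
      have : |((1/2 : ℝ)^n * 2)⁻¹| = 2^n / 2 := by
        rw [abs_of_nonneg (by positivity)]
        rw [mul_inv, ← inv_pow]
        norm_num
        ring
      rw [this]
      calc ENNReal.ofReal ((2:ℝ)^n / 2) ≤ ENNReal.ofReal ((2:ℝ)^n) := by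
            apply ENNReal.ofReal_le_ofReal
            have : (0:ℝ) < 2^n := by positivity
            linarith
        _ = 2 ^ n := by
            rw [show ((2:ℝ)^n) = ((2:ENNReal)^n).toReal by simp [ENNReal.toReal_pow],
              ENNReal.ofReal_toReal (ENNReal.pow_ne_top ENNReal.ofNat_ne_top)]
    exact mul_le_mul' hcoef hint_le
  -- assemble
  have hsummeas : Measurable fun y => ∑ i, ρ (L i y) := by
    apply Finset.measurable_sum
    intro i _
    exact hρmeas.comp (L i).continuous_of_finiteDimensional.measurable
  rw [hypVol_eq D hDmeas]
  refine le_trans (setLIntegral_mono hsummeas hpoint) ?_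
  refine le_trans (le_of_eq (lintegral_finset_sum (μ := volume.restrict (D ∩ ball 0 1))
    (f := fun i a => ρ (L i a)) Finset.univ (fun i _ =>
    hρmeas.comp (L i).continuous_of_finiteDimensional.measurable))) ?_
  refine le_trans (Finset.sum_le_sum fun i _ => key i) ?_
  rw [Finset.mul_sum]
end

section
/- Let x_1, ..., x_n be linearly independent unit vectors in ℝ^n, and for each i define T_i(∑_{j=1}^n α_j x_j) = (1/2) ∑_{j=1}^n α_j x_j + (1/2)(∑_{j=1}^n α_j) x_i. Then for every point y in convexHull {0, x_1, ..., x_n} there exists an index i ∈ {1, ..., n} such that ‖T_i(y)‖ ≥ ‖y‖ (Euclidean norms). -/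
open Metric Set

theorem exists_index_norm_le (n : ℕ) (hn : 1 ≤ n)
    (x : Fin n → EuclideanSpace ℝ (Fin n))
    (hunit : ∀ i, ‖x i‖ = 1) (hli : LinearIndependent ℝ x)
    (α : Fin n → ℝ) (hα : ∀ j, 0 ≤ α j) (hsum : (∑ j, α j) ≤ 1) :
    ∃ i : Fin n,
      ‖∑ j, α j • x j‖ ≤
        ‖(1 / 2 : ℝ) • (∑ j, α j • x j) + ((1 / 2) * ∑ j, α j) • x i‖ := by
  have hne : Nonempty (Fin n) := ⟨⟨0, hn⟩⟩
  set y : EuclideanSpace ℝ (Fin n) := ∑ j, α j • x j with hy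
  set s : ℝ := ∑ j, α j with hs
  have hs0 : 0 ≤ s := Finset.sum_nonneg fun j _ => hα j
  obtain ⟨i, -, hi⟩ := Finset.exists_max_image Finset.univ
    (fun j => (inner ℝ y (x j) : ℝ)) ⟨Classical.arbitrary _, Finset.mem_univ _⟩
  refine ⟨i, ?_⟩
  have hmax : ∀ j, (inner ℝ y (x j) : ℝ) ≤ inner ℝ y (x i) := fun j => hi j (Finset.mem_univ j)
  have hy2 : ‖y‖ ^ 2 = ∑ j, α j * inner ℝ y (x j) := by
    rw [← real_inner_self_eq_norm_sq]
    nth_rewrite 2 [hy]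
    rw [inner_sum]
    simp only [real_inner_smul_right]
  have hle1 : ‖y‖ ^ 2 ≤ s * inner ℝ y (x i) := by
    rw [hy2, hs, Finset.sum_mul]
    exact Finset.sum_le_sum fun j _ =>
      mul_le_mul_of_nonneg_left (hmax j) (hα j)
  have hys : ‖y‖ ≤ s := by
    calc ‖y‖ ≤ ∑ j, ‖α j • x j‖ := norm_sum_le _ _
    _ = s := by
      rw [hs]
      refine Finset.sum_congr rfl fun j _ => ?_
      rw [norm_smul, hunit j, Real.norm_eq_abs, abs_of_nonneg (hα j), mul_one]
  have key : ‖y‖ ^ 2 ≤ ‖(1 / 2 : ℝ) • y + ((1 / 2) * s) • x i‖ ^ 2 := by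
    rw [norm_add_sq_real, real_inner_smul_left, real_inner_smul_right,
      norm_smul, norm_smul, hunit i, Real.norm_eq_abs, Real.norm_eq_abs,
      abs_of_nonneg (by positivity : (0:ℝ) ≤ 1/2),
      abs_of_nonneg (by positivity : (0:ℝ) ≤ 1/2 * s), mul_one]
    nlinarith [norm_nonneg y, hle1, hys, sq_nonneg (‖y‖ - s)]
  calc ‖y‖ = √(‖y‖ ^ 2) := (Real.sqrt_sq (norm_nonneg _)).symm
  _ ≤ √(‖(1 / 2 : ℝ) • y + ((1 / 2) * s) • x i‖ ^ 2) := Real.sqrt_le_sqrt key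
  _ = _ := Real.sqrt_sq (norm_nonneg _)
end

section
/- For each n ≥ 2 there exists a constant C_n > 0 such that for every φ with 0 < φ < arctan(1/10), the double integral ∫_0^1 ∫_0^{L(u)} v^{n-2} · (1 - (1-u)² - v²)^{-(n+1)/2} dv du is at most C_n, where L(u) = u·cot(φ) for 0 ≤ u ≤ sin²(φ) and L(u) = (1-u)·tan(φ) for sin²(φ) ≤ u ≤ 1. -/
open Real Set intervalIntegral MeasureTheory

private lemma aux_div1 (a b N : ℝ) (hN : N ≠ 0) :
    a / N * ((b - 0) / (N / 2)) = a * b * (2 / N ^ 2) := by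
  field_simp; ring

private lemma aux_div2 (a c N : ℝ) (hN : N ≠ 0) :
    a / N * (c * (2 / N)) = a * c * (2 / N ^ 2) := by
  field_simp

private lemma aux_div3 (I N : ℝ) (hN : N ≠ 0) :
    (1 - I) / (-(N / 2)) = (I - 1) * (2 / N) := by
  calc (1 - I) / (-(N / 2)) = (-(1 - I)) / (N / 2) := by rw [div_neg, neg_div]
    _ = (I - 1) * 2 / N := by rw [neg_sub, div_div_eq_mul_div]
    _ = (I - 1) * (2 / N) := mul_div_assoc _ _ _

set_option maxHeartbeats 1000000 in
theorem cone_integral_bounded (n : ℕ) (hn : 2 ≤ n) :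
    ∃ C : ℝ, 0 < C ∧ ∀ φ : ℝ, 0 < φ → φ < Real.arctan (1 / 10) →
      (∫ u in (0 : ℝ)..1,
        ∫ v in (0 : ℝ)..(if u ≤ sin φ ^ 2 then u * Real.cot φ else (1 - u) * Real.tan φ),
          v ^ (n - 2) * (1 - (1 - u) ^ 2 - v ^ 2) ^ (-((n : ℝ) + 1) / 2)) ≤ C := by
  refine ⟨2 + 2 * (10 / 9) ^ (n - 1), by positivity, fun φ hφ0 hφ1 => ?_⟩
  have hnR : (2 : ℝ) ≤ (n : ℝ) := by exact_mod_cast hn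
  have hN1 : (1 : ℝ) ≤ (n : ℝ) - 1 := by linarith
  have hN0 : (0 : ℝ) < (n : ℝ) - 1 := by linarith
  have hcastN : ((n - 1 : ℕ) : ℝ) = (n : ℝ) - 1 := by
    rw [Nat.cast_sub (by omega)]; norm_num
  have hφπ2 : φ < π / 2 := hφ1.trans (Real.arctan_lt_pi_div_two _)
  have hφπ : φ < π := by linarith [Real.pi_pos]
  have hsin : 0 < sin φ := Real.sin_pos_of_pos_of_lt_pi hφ0 hφπ
  have hcos : 0 < cos φ := Real.cos_pos_of_mem_Ioo ⟨by linarith, hφπ2⟩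
  have hcos9 : (9 : ℝ) / 10 ≤ cos φ := by
    have h1 : cos (Real.arctan (1 / 10)) ≤ cos φ :=
      Real.cos_le_cos_of_nonneg_of_le_pi hφ0.le
        (by linarith [Real.arctan_lt_pi_div_two (1 / 10 : ℝ), Real.pi_pos]) hφ1.le
    have h2 : cos (Real.arctan (1 / 10 : ℝ)) = 1 / √(1 + (1 / 10 : ℝ) ^ 2) :=
      Real.cos_arctan _
    have hsq : √(1 + (1 / 10 : ℝ) ^ 2) ≤ 10 / 9 := by
      rw [show (1 + (1 / 10 : ℝ) ^ 2) = 101/100 by norm_num]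
      have := Real.sqrt_le_sqrt (show (101 / 100 : ℝ) ≤ (10 / 9) ^ 2 by norm_num)
      rwa [Real.sqrt_sq (by norm_num : (0:ℝ) ≤ 10 / 9)] at this
    have hsp : 0 < √(1 + (1 / 10 : ℝ) ^ 2) := Real.sqrt_pos.mpr (by norm_num)
    rw [h2] at h1
    refine le_trans ?_ h1
    rw [le_div_iff₀ hsp]
    nlinarith
  have htan : 0 < Real.tan φ := by rw [Real.tan_eq_sin_div_cos]; positivity
  have hcot : 0 < Real.cot φ := by rw [Real.cot_eq_cos_div_sin]; positivity
  have hs0 : 0 < sin φ ^ 2 := by positivity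
  have hs1 : sin φ ^ 2 < 1 := by nlinarith [Real.sin_sq_add_cos_sq φ]
  -- the dominating function
  set g : ℝ → ℝ := fun u =>
    if u ≤ sin φ ^ 2 then Real.cot φ ^ (n - 1) / ((n : ℝ) - 1) * u ^ (((n : ℝ) - 3) / 2)
    else Real.tan φ ^ (n - 1) / ((n : ℝ) - 1) * u ^ (-((n : ℝ) + 1) / 2) with hgdef
  have hgnn : ∀ u : ℝ, 0 ≤ u → 0 ≤ g u := by
    intro u hu
    rw [hgdef]
    dsimp only
    split
    · exact mul_nonneg (by positivity) (Real.rpow_nonneg hu _)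
    · exact mul_nonneg (by positivity) (Real.rpow_nonneg hu _)
  -- pointwise bound on the inner integral
  have hptwise : ∀ u ∈ Icc (0 : ℝ) 1,
      (∫ v in (0 : ℝ)..(if u ≤ sin φ ^ 2 then u * Real.cot φ else (1 - u) * Real.tan φ),
        v ^ (n - 2) * (1 - (1 - u) ^ 2 - v ^ 2) ^ (-((n : ℝ) + 1) / 2)) ≤ g u := by
    intro u hu
    set L : ℝ := if u ≤ sin φ ^ 2 then u * Real.cot φ else (1 - u) * Real.tan φ with hLdef
    have hL0 : 0 ≤ L := by
      rw [hLdef]; split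
      · exact mul_nonneg hu.1 hcot.le
      · exact mul_nonneg (by linarith [hu.2]) htan.le
    rcases eq_or_lt_of_le hu.1 with hu0 | hu0
    · -- u = 0
      have hLz : L = 0 := by
        rw [hLdef, if_pos (by rw [← hu0]; exact hs0.le), ← hu0, zero_mul]
      rw [hLz, intervalIntegral.integral_same]
      exact hgnn u hu.1
    -- 0 < u
    have hweight : ∀ v ∈ Icc (0 : ℝ) L, u ≤ 1 - (1 - u) ^ 2 - v ^ 2 := by
      intro v hv
      rw [hLdef] at hv
      by_cases hus : u ≤ sin φ ^ 2
      · rw [if_pos hus] at hv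
        have hvs : v * sin φ ≤ u * cos φ := by
          have h1 : v ≤ u * (cos φ / sin φ) := by
            rw [← Real.cot_eq_cos_div_sin]; exact hv.2
          have h2 := mul_le_mul_of_nonneg_right h1 hsin.le
          rwa [mul_assoc, div_mul_cancel₀ _ (ne_of_gt hsin)] at h2
        have hvnn : 0 ≤ v * sin φ := mul_nonneg hv.1 hsin.le
        nlinarith [Real.sin_sq_add_cos_sq φ, sq_nonneg (cos φ), mul_pos hu0 hs0,
          mul_nonneg hu0.le (sq_nonneg (cos φ))]
      · rw [if_neg hus] at hv
        have hus' : sin φ ^ 2 < u := not_le.mp hus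
        have h1u : 0 ≤ 1 - u := by linarith [hu.2]
        have hvs : v * cos φ ≤ (1 - u) * sin φ := by
          have h1 : v ≤ (1 - u) * (sin φ / cos φ) := by
            rw [← Real.tan_eq_sin_div_cos]; exact hv.2
          have h2 := mul_le_mul_of_nonneg_right h1 hcos.le
          rwa [mul_assoc, div_mul_cancel₀ _ (ne_of_gt hcos)] at h2
        have hvnn : 0 ≤ v * cos φ := mul_nonneg hv.1 hcos.le
        nlinarith [Real.sin_sq_add_cos_sq φ, sq_nonneg (sin φ), mul_pos hcos hcos,
          mul_nonneg h1u (sq_nonneg (sin φ))]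
    have hexp : -((n : ℝ) + 1) / 2 ≤ 0 := by
      have : (0 : ℝ) ≤ (n : ℝ) := Nat.cast_nonneg n
      linarith
    by_cases hint : IntervalIntegrable
        (fun v => v ^ (n - 2) * (1 - (1 - u) ^ 2 - v ^ 2) ^ (-((n : ℝ) + 1) / 2)) volume 0 L
    swap
    · rw [intervalIntegral.integral_undef hint]; exact hgnn u hu.1
    have hbint : IntervalIntegrable
        (fun v => v ^ (n - 2) * u ^ (-((n : ℝ) + 1) / 2)) volume 0 L :=
      (((continuous_pow (n - 2)).mul continuous_const)).intervalIntegrable _ _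
    have step1 : (∫ v in (0 : ℝ)..L,
          v ^ (n - 2) * (1 - (1 - u) ^ 2 - v ^ 2) ^ (-((n : ℝ) + 1) / 2))
        ≤ ∫ v in (0 : ℝ)..L, v ^ (n - 2) * u ^ (-((n : ℝ) + 1) / 2) := by
      refine intervalIntegral.integral_mono_on hL0 hint hbint fun v hv => ?_
      refine mul_le_mul_of_nonneg_left ?_ (pow_nonneg hv.1 _)
      exact Real.rpow_le_rpow_of_nonpos hu0 (hweight v hv) hexp
    have step2 : (∫ v in (0 : ℝ)..L, v ^ (n - 2) * u ^ (-((n : ℝ) + 1) / 2))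
        = L ^ (n - 1) / ((n : ℝ) - 1) * u ^ (-((n : ℝ) + 1) / 2) := by
      rw [intervalIntegral.integral_mul_const, integral_pow]
      have h2 : n - 2 + 1 = n - 1 := by omega
      rw [h2]
      rw [show ((n - 2 : ℕ) : ℝ) + 1 = (n : ℝ) - 1 by
        rw [Nat.cast_sub hn]; push_cast; ring]
      rw [zero_pow (by omega : n - 1 ≠ 0)]
      ring
    refine le_trans step1 (le_of_eq step2 |>.trans ?_)
    rw [hgdef]; dsimp only
    rw [hLdef]
    by_cases hus : u ≤ sin φ ^ 2
    · rw [if_pos hus, if_pos hus]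
      rw [mul_pow, ← Real.rpow_natCast u (n - 1), hcastN]
      rw [show u ^ ((n : ℝ) - 1) * Real.cot φ ^ (n - 1) / ((n : ℝ) - 1) *
            u ^ (-((n : ℝ) + 1) / 2)
          = Real.cot φ ^ (n - 1) / ((n : ℝ) - 1) *
            (u ^ ((n : ℝ) - 1) * u ^ (-((n : ℝ) + 1) / 2)) by ring]
      rw [← Real.rpow_add hu0, show (n : ℝ) - 1 + -((n : ℝ) + 1) / 2 = ((n : ℝ) - 3) / 2 by ring]
    · rw [if_neg hus, if_neg hus]
      refine mul_le_mul_of_nonneg_right ?_ (Real.rpow_nonneg hu.1 _)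
      refine (div_le_div_iff_of_pos_right hN0).mpr ?_
      rw [mul_pow]
      calc (1 - u) ^ (n - 1) * Real.tan φ ^ (n - 1)
          ≤ 1 * Real.tan φ ^ (n - 1) := by
            refine mul_le_mul_of_nonneg_right ?_ (pow_nonneg htan.le _)
            exact pow_le_one₀ (by linarith [hu.2]) (by linarith [hu.1])
        _ = Real.tan φ ^ (n - 1) := one_mul _
  -- integrability of g on the two pieces
  have hrA : (-1 : ℝ) < ((n : ℝ) - 3) / 2 := by linarith
  have hintA : IntervalIntegrable g volume 0 (sin φ ^ 2) := by
    refine ((intervalIntegral.intervalIntegrable_rpow' hrA (a := 0) (b := sin φ ^ 2)).const_mul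
      (Real.cot φ ^ (n - 1) / ((n : ℝ) - 1))).congr_ae ?_
    filter_upwards [ae_restrict_mem measurableSet_uIoc] with x hx
    rw [Set.uIoc_of_le hs0.le] at hx
    rw [hgdef]; dsimp only; rw [if_pos hx.2]
  have hintB : IntervalIntegrable g volume (sin φ ^ 2) 1 := by
    have hcont : ContinuousOn (fun u : ℝ => Real.tan φ ^ (n - 1) / ((n : ℝ) - 1) *
        u ^ (-((n : ℝ) + 1) / 2)) (Set.uIcc (sin φ ^ 2) 1) := by
      rw [Set.uIcc_of_le hs1.le]
      refine continuousOn_const.mul fun x hx => ?_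
      exact (Real.continuousAt_rpow_const x _
        (Or.inl (ne_of_gt (lt_of_lt_of_le hs0 hx.1)))).continuousWithinAt
    refine hcont.intervalIntegrable.congr_ae ?_
    filter_upwards [ae_restrict_mem measurableSet_uIoc] with x hx
    rw [Set.uIoc_of_le hs1.le] at hx
    rw [hgdef]; dsimp only; rw [if_neg (not_le.mpr hx.1)]
  have hgint : IntervalIntegrable g volume 0 1 := hintA.trans hintB
  have hNsq : (1:ℝ) ≤ ((n:ℝ) - 1) ^ 2 := by nlinarith
  -- bound on the first piece
  have hIA : (∫ u in (0:ℝ)..(sin φ ^ 2), g u) ≤ 2 := by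
    have hcongr : (∫ u in (0:ℝ)..(sin φ ^ 2), g u)
        = ∫ u in (0:ℝ)..(sin φ ^ 2),
            Real.cot φ ^ (n - 1) / ((n : ℝ) - 1) * u ^ (((n : ℝ) - 3) / 2) := by
      refine intervalIntegral.integral_congr_ae (MeasureTheory.ae_of_all _ fun x hx => ?_)
      rw [Set.uIoc_of_le hs0.le] at hx
      rw [hgdef]; dsimp only; rw [if_pos hx.2]
    rw [hcongr, intervalIntegral.integral_const_mul, integral_rpow (Or.inl hrA)]
    rw [show ((n : ℝ) - 3) / 2 + 1 = ((n : ℝ) - 1) / 2 by ring]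
    rw [Real.zero_rpow (by positivity : ((n : ℝ) - 1) / 2 ≠ 0)]
    have hspow : (sin φ ^ 2 : ℝ) ^ (((n : ℝ) - 1) / 2) = sin φ ^ (n - 1) := by
      rw [← Real.rpow_natCast (sin φ) 2, ← Real.rpow_mul hsin.le,
        show ((2:ℕ):ℝ) * (((n : ℝ) - 1) / 2) = ((n - 1 : ℕ) : ℝ) by rw [hcastN]; push_cast; ring,
        Real.rpow_natCast]
    rw [hspow]
    have hkey : Real.cot φ ^ (n - 1) * sin φ ^ (n - 1) = cos φ ^ (n - 1) := by
      rw [← mul_pow, Real.cot_eq_cos_div_sin, div_mul_cancel₀ _ (ne_of_gt hsin)]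
    have heq : Real.cot φ ^ (n - 1) / ((n : ℝ) - 1) * ((sin φ ^ (n - 1) - 0) / (((n : ℝ) - 1) / 2))
        = cos φ ^ (n - 1) * (2 / ((n : ℝ) - 1) ^ 2) := by
      rw [aux_div1 _ _ _ hN0.ne', hkey]
    rw [heq]
    have h1 : cos φ ^ (n - 1) ≤ 1 := pow_le_one₀ hcos.le (Real.cos_le_one φ)
    have h2 : 2 / ((n : ℝ) - 1) ^ 2 ≤ 2 := div_le_self (by norm_num) hNsq
    have h3 : (0:ℝ) ≤ 2 / ((n : ℝ) - 1) ^ 2 := div_nonneg (by norm_num) (sq_nonneg _)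
    calc cos φ ^ (n - 1) * (2 / ((n : ℝ) - 1) ^ 2) ≤ 1 * 2 := mul_le_mul h1 h2 h3 zero_le_one
      _ = 2 := one_mul 2
  -- bound on the second piece
  have hIB : (∫ u in (sin φ ^ 2)..1, g u) ≤ 2 * (10 / 9 : ℝ) ^ (n - 1) := by
    have hcongr : (∫ u in (sin φ ^ 2)..1, g u)
        = ∫ u in (sin φ ^ 2)..1,
            Real.tan φ ^ (n - 1) / ((n : ℝ) - 1) * u ^ (-((n : ℝ) + 1) / 2) := by
      refine intervalIntegral.integral_congr_ae (MeasureTheory.ae_of_all _ fun x hx => ?_)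
      rw [Set.uIoc_of_le hs1.le] at hx
      rw [hgdef]; dsimp only; rw [if_neg (not_le.mpr hx.1)]
    have h0m : (0:ℝ) ∉ Set.uIcc (sin φ ^ 2) 1 := by
      rw [Set.uIcc_of_le hs1.le]; rintro ⟨h1, -⟩; exact absurd h1 (not_le.mpr hs0)
    rw [hcongr, intervalIntegral.integral_const_mul,
      integral_rpow (Or.inr ⟨ne_of_lt (by linarith), h0m⟩), Real.one_rpow]
    rw [show -((n : ℝ) + 1) / 2 + 1 = -(((n : ℝ) - 1) / 2) by ring]
    have hspow : (sin φ ^ 2 : ℝ) ^ (-(((n : ℝ) - 1) / 2)) = (sin φ ^ (n - 1))⁻¹ := by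
      rw [← Real.rpow_natCast (sin φ) 2, ← Real.rpow_mul hsin.le,
        show ((2:ℕ):ℝ) * (-(((n : ℝ) - 1) / 2)) = -((n - 1 : ℕ) : ℝ) by rw [hcastN]; push_cast; ring,
        Real.rpow_neg hsin.le, Real.rpow_natCast]
    rw [hspow]
    have heq : (1 - (sin φ ^ (n - 1))⁻¹) / (-(((n : ℝ) - 1) / 2))
        = ((sin φ ^ (n - 1))⁻¹ - 1) * (2 / ((n : ℝ) - 1)) :=
      aux_div3 _ _ hN0.ne'
    rw [heq]
    have hsle : ((sin φ ^ (n - 1))⁻¹ - 1) * (2 / ((n : ℝ) - 1))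
        ≤ (sin φ ^ (n - 1))⁻¹ * (2 / ((n : ℝ) - 1)) :=
      mul_le_mul_of_nonneg_right (by linarith) (div_nonneg (by norm_num) hN0.le)
    have hkey : Real.tan φ ^ (n - 1) * (sin φ ^ (n - 1))⁻¹ = ((cos φ)⁻¹) ^ (n - 1) := by
      rw [← inv_pow, ← mul_pow, Real.tan_eq_sin_div_cos]
      congr 1
      field_simp
    have heq2 : Real.tan φ ^ (n - 1) / ((n : ℝ) - 1) * ((sin φ ^ (n - 1))⁻¹ * (2 / ((n : ℝ) - 1)))
        = ((cos φ)⁻¹) ^ (n - 1) * (2 / ((n : ℝ) - 1) ^ 2) := by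
      rw [aux_div2 _ _ _ hN0.ne', hkey]
    have hinv : (cos φ)⁻¹ ≤ 10 / 9 := by
      rw [show (10:ℝ) / 9 = ((9:ℝ) / 10)⁻¹ by norm_num]
      exact inv_anti₀ (by norm_num) hcos9
    have hpow : ((cos φ)⁻¹) ^ (n - 1) ≤ (10 / 9 : ℝ) ^ (n - 1) :=
      pow_le_pow_left₀ (by positivity) hinv _
    calc Real.tan φ ^ (n - 1) / ((n : ℝ) - 1) * (((sin φ ^ (n - 1))⁻¹ - 1) * (2 / ((n : ℝ) - 1)))
        ≤ Real.tan φ ^ (n - 1) / ((n : ℝ) - 1) * ((sin φ ^ (n - 1))⁻¹ * (2 / ((n : ℝ) - 1))) :=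
          mul_le_mul_of_nonneg_left hsle (div_nonneg (pow_nonneg htan.le _) hN0.le)
      _ = ((cos φ)⁻¹) ^ (n - 1) * (2 / ((n : ℝ) - 1) ^ 2) := heq2
      _ ≤ (10 / 9 : ℝ) ^ (n - 1) * 2 := by
          have h2 : 2 / ((n : ℝ) - 1) ^ 2 ≤ 2 := div_le_self (by norm_num) hNsq
          have h3 : (0:ℝ) ≤ 2 / ((n : ℝ) - 1) ^ 2 :=
            div_nonneg (by norm_num) (sq_nonneg _)
          exact mul_le_mul hpow h2 h3 (by positivity)
      _ = 2 * (10 / 9 : ℝ) ^ (n - 1) := by ring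
  -- conclude
  by_cases H : IntervalIntegrable (fun u =>
      ∫ v in (0:ℝ)..(if u ≤ sin φ ^ 2 then u * Real.cot φ else (1 - u) * Real.tan φ),
        v ^ (n - 2) * (1 - (1 - u) ^ 2 - v ^ 2) ^ (-((n : ℝ) + 1) / 2)) volume 0 1
  · calc (∫ u in (0:ℝ)..1,
        ∫ v in (0:ℝ)..(if u ≤ sin φ ^ 2 then u * Real.cot φ else (1 - u) * Real.tan φ),
          v ^ (n - 2) * (1 - (1 - u) ^ 2 - v ^ 2) ^ (-((n : ℝ) + 1) / 2))
        ≤ ∫ u in (0:ℝ)..1, g u :=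
          intervalIntegral.integral_mono_on zero_le_one H hgint hptwise
      _ = (∫ u in (0:ℝ)..(sin φ ^ 2), g u) + ∫ u in (sin φ ^ 2)..1, g u :=
          (intervalIntegral.integral_add_adjacent_intervals hintA hintB).symm
      _ ≤ 2 + 2 * (10 / 9 : ℝ) ^ (n - 1) := add_le_add hIA hIB
  · rw [intervalIntegral.integral_undef H]
    positivity
end

section
/- For each dimension n ≥ 1 there exists a constant c_n > 0 such that for every natural number N ≥ n + 1 there exist N points x_1, ..., x_N in the open unit ball B ⊂ ℝ^n with μ_n(convexHull {x_1, ..., x_N}) > c_n · N. -/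
open MeasureTheory Metric Set

namespace HypAux

/-- the scale of the `k`-th box -/
noncomputable def bb (k : ℕ) : ℝ := (2⁻¹ : ℝ) ^ k

lemma bb_pos (k : ℕ) : 0 < bb k := by unfold bb; positivity

lemma bb_le_one (k : ℕ) : bb k ≤ 1 := by
  unfold bb
  exact pow_le_one₀ (by norm_num) (by norm_num)

lemma bb_antitone {k l : ℕ} (h : k ≤ l) : bb l ≤ bb k :=
  pow_le_pow_of_le_one (by norm_num) (by norm_num) h

lemma bb_succ (k : ℕ) : bb (k + 1) = bb k / 2 := by
  unfold bb; rw [pow_succ]; ring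

/-- transverse half-width of the `k`-th box -/
noncomputable def ww (k : ℕ) : ℝ := Real.sqrt (bb k) / 2

lemma ww_pos (k : ℕ) : 0 < ww k := by
  have h : 0 < Real.sqrt (bb k) := Real.sqrt_pos.mpr (bb_pos k)
  unfold ww; linarith

lemma ww_sq (k : ℕ) : ww k ^ 2 = bb k / 4 := by
  unfold ww
  rw [div_pow, Real.sq_sqrt (bb_pos k).le]
  norm_num

variable (m : ℕ)

/-- the coordinate intervals of the `k`-th box -/
noncomputable def J (k : ℕ) : Fin (m + 1) → Set ℝ := fun i =>
  if i = 0 then Ico (1 - bb k) (1 - bb k + bb k / (2 * (m + 1)))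
  else Icc 0 (ww k / (m + 1))

/-- the `k`-th box -/
noncomputable def box (k : ℕ) : Set (EuclideanSpace ℝ (Fin (m + 1))) :=
  WithLp.ofLp ⁻¹' Set.univ.pi (J m k)

/-- edge lengths of the simplex containing the `k`-th box -/
noncomputable def dd (k : ℕ) : Fin (m + 1) → ℝ := fun i =>
  if i = 0 then bb k / 2 else ww k

/-- vertices of the simplex containing the `k`-th box -/
noncomputable def vtx (k : ℕ) : Option (Fin (m + 1)) → EuclideanSpace ℝ (Fin (m + 1))
  | none => EuclideanSpace.single 0 (1 - bb k)
  | some i => EuclideanSpace.single 0 (1 - bb k) + EuclideanSpace.single i (dd m k i)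

lemma normsq (x : EuclideanSpace ℝ (Fin (m + 1))) : ‖x‖ ^ 2 = ∑ i, x i ^ 2 := by
  rw [EuclideanSpace.norm_eq, Real.sq_sqrt (by positivity)]
  simp [Real.norm_eq_abs, sq_abs]

lemma mem_ball_of_sumsq {x : EuclideanSpace ℝ (Fin (m + 1))} (h : ∑ i, x i ^ 2 < 1) :
    x ∈ ball (0 : EuclideanSpace ℝ (Fin (m + 1))) 1 := by
  rw [mem_ball_zero_iff, ← Real.sqrt_one, EuclideanSpace.norm_eq]
  have he : ∑ i, ‖x i‖ ^ 2 = ∑ i, x i ^ 2 := by simp [Real.norm_eq_abs, sq_abs]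
  rw [he]
  exact Real.sqrt_lt_sqrt (by positivity) h

/-- the key geometric estimate: points with first coordinate in `[1-bb k, 1-bb k/2]` and small
transverse coordinates are well inside the unit ball. -/
lemma sumsq_lt {k : ℕ} {x : EuclideanSpace ℝ (Fin (m + 1))}
    (h0l : 1 - bb k ≤ x 0) (h0r : x 0 ≤ 1 - bb k / 2)
    (h1 : ∑ i ∈ Finset.univ.erase 0, x i ^ 2 ≤ bb k / 4) :
    ∑ i, x i ^ 2 ≤ 1 - bb k / 2 := by
  have hb0 := bb_pos k
  have hb1 := bb_le_one k
  have hsplit : x 0 ^ 2 + ∑ i ∈ Finset.univ.erase 0, x i ^ 2 = ∑ i, x i ^ 2 :=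
    Finset.add_sum_erase _ (fun i : Fin (m + 1) => x i ^ 2) (Finset.mem_univ (0 : Fin (m + 1)))
  have hx0 : x 0 ^ 2 ≤ (1 - bb k / 2) ^ 2 := by nlinarith
  nlinarith

lemma vtx_none_apply (k : ℕ) (j : Fin (m + 1)) :
    (vtx m k none) j = if j = 0 then 1 - bb k else 0 := by
  simp [vtx, EuclideanSpace.single_apply]

lemma vtx_some_apply (k : ℕ) (i j : Fin (m + 1)) :
    (vtx m k (some i)) j = (if j = 0 then 1 - bb k else 0) + (if j = i then dd m k i else 0) := by
  simp [vtx, PiLp.add_apply, EuclideanSpace.single_apply]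

lemma vtx_sumsq {k : ℕ} (o : Option (Fin (m + 1))) :
    ∑ i, (vtx m k o) i ^ 2 ≤ 1 - bb k / 2 := by
  have hb0 := bb_pos k
  have hb1 := bb_le_one k
  have hwsq := ww_sq k
  have hdd0 : dd m k 0 = bb k / 2 := by simp [dd]
  cases o with
  | none =>
    apply sumsq_lt
    · rw [vtx_none_apply, if_pos rfl]
    · rw [vtx_none_apply, if_pos rfl]; linarith
    · have h : ∀ i ∈ Finset.univ.erase (0 : Fin (m+1)), (vtx m k none) i ^ 2 = 0 := by
        intro i hi
        have hi0 : i ≠ 0 := (Finset.mem_erase.mp hi).1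
        rw [vtx_none_apply, if_neg hi0]
        ring
      rw [Finset.sum_congr rfl h, Finset.sum_const, smul_zero]
      linarith
  | some j =>
    rcases eq_or_ne j 0 with hj | hj
    · subst hj
      apply sumsq_lt
      · rw [vtx_some_apply, if_pos rfl, if_pos rfl, hdd0]; linarith
      · rw [vtx_some_apply, if_pos rfl, if_pos rfl, hdd0]; linarith
      · have h : ∀ i ∈ Finset.univ.erase (0 : Fin (m+1)), (vtx m k (some 0)) i ^ 2 = 0 := by
          intro i hi
          have hi0 : i ≠ 0 := (Finset.mem_erase.mp hi).1
          rw [vtx_some_apply, if_neg hi0, if_neg hi0]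
          ring
        rw [Finset.sum_congr rfl h, Finset.sum_const, smul_zero]
        linarith
    · apply sumsq_lt
      · rw [vtx_some_apply, if_pos rfl, if_neg (Ne.symm hj)]; linarith
      · rw [vtx_some_apply, if_pos rfl, if_neg (Ne.symm hj)]; linarith
      · have h : ∀ i ∈ Finset.univ.erase (0 : Fin (m+1)), (vtx m k (some j)) i ^ 2 =
            if i = j then ww k ^ 2 else 0 := by
          intro i hi
          have hi0 : i ≠ 0 := (Finset.mem_erase.mp hi).1
          rcases eq_or_ne i j with h | h
          · subst h
            rw [vtx_some_apply, if_neg hi0, if_pos rfl, if_pos rfl]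
            have hddj : dd m k i = ww k := by simp [dd, hi0]
            rw [hddj]; ring
          · rw [vtx_some_apply, if_neg hi0, if_neg h, if_neg h]
            ring
        rw [Finset.sum_congr rfl h, Finset.sum_ite_eq' _ j]
        have hjmem : j ∈ Finset.univ.erase (0 : Fin (m+1)) := by simp [hj]
        rw [if_pos hjmem, hwsq]

lemma vtx_mem_ball {k : ℕ} (o : Option (Fin (m + 1))) :
    vtx m k o ∈ ball (0 : EuclideanSpace ℝ (Fin (m + 1))) 1 := by
  apply mem_ball_of_sumsq
  have h1 := vtx_sumsq m (k := k) o
  have h2 := bb_pos k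
  linarith

lemma mem_box_iff {k : ℕ} {x : EuclideanSpace ℝ (Fin (m + 1))} :
    x ∈ box m k ↔ (1 - bb k ≤ x 0 ∧ x 0 < 1 - bb k + bb k / (2 * (m + 1))) ∧
      ∀ i : Fin (m + 1), i ≠ 0 → 0 ≤ x i ∧ x i ≤ ww k / (m + 1) := by
  constructor
  · intro hx
    have hx' : ∀ i, x i ∈ J m k i := fun i => hx i (Set.mem_univ i)
    constructor
    · have h := hx' 0; simp only [J, if_pos rfl, mem_Ico] at h; exact h
    · intro i hi; have h := hx' i; simp only [J, if_neg hi, mem_Icc] at h; exact h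
  · rintro ⟨h0, h1⟩ i _
    rcases eq_or_ne i 0 with rfl | hi
    · simp only [J, if_pos rfl, mem_Ico]; exact h0
    · simp only [J, if_neg hi, mem_Icc]; exact h1 i hi

lemma box_sumsq {k : ℕ} {x : EuclideanSpace ℝ (Fin (m + 1))} (hx : x ∈ box m k) :
    ∑ i, x i ^ 2 ≤ 1 - bb k / 2 ∧ (1 - bb k) ^ 2 ≤ ∑ i, x i ^ 2 := by
  rw [mem_box_iff] at hx
  obtain ⟨⟨h0a, h0b⟩, h1⟩ := hx
  have hb0 := bb_pos k
  have hb1 := bb_le_one k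
  have hm1 : (1 : ℝ) ≤ (m : ℝ) + 1 := by
    have := Nat.cast_nonneg (α := ℝ) m; linarith
  have hwsq := ww_sq k
  have hw := ww_pos k
  have herase : ∑ i ∈ Finset.univ.erase 0, x i ^ 2 ≤ bb k / 4 := by
    have hbound : ∀ i ∈ Finset.univ.erase (0 : Fin (m+1)), x i ^ 2 ≤ (ww k / (m+1)) ^ 2 := by
      intro i hi
      have hi0 : i ≠ 0 := (Finset.mem_erase.mp hi).1
      obtain ⟨ha, hb⟩ := h1 i hi0
      nlinarith
    calc ∑ i ∈ Finset.univ.erase 0, x i ^ 2 ≤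
        ∑ _i ∈ Finset.univ.erase (0 : Fin (m+1)), (ww k / (m+1)) ^ 2 :=
          Finset.sum_le_sum hbound
      _ = m * (ww k / (m+1)) ^ 2 := by
          rw [Finset.sum_const, Finset.card_erase_of_mem (Finset.mem_univ _), Finset.card_univ,
            Fintype.card_fin, Nat.add_sub_cancel, nsmul_eq_mul]
      _ ≤ bb k / 4 := by
          rw [div_pow, hwsq]
          have hkey : (m:ℝ) * (bb k / 4 / ((m:ℝ)+1)^2) = bb k/4 * ((m:ℝ)/((m:ℝ)+1)^2) := by
            ring
          rw [hkey]
          have hle1 : (m:ℝ)/((m:ℝ)+1)^2 ≤ 1 := by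
            rw [div_le_one (by positivity)]
            nlinarith [Nat.cast_nonneg (α := ℝ) m]
          calc bb k / 4 * ((m:ℝ)/((m:ℝ)+1)^2) ≤ bb k / 4 * 1 :=
                mul_le_mul_of_nonneg_left hle1 (by linarith)
            _ = bb k / 4 := mul_one _
  have h0r : x 0 ≤ 1 - bb k / 2 := by
    have hd : bb k / (2 * ((m:ℝ) + 1)) ≤ bb k / 2 := by
      apply div_le_div_of_nonneg_left hb0.le (by norm_num)
      linarith
    linarith
  refine ⟨sumsq_lt m h0a h0r herase, ?_⟩
  have hsplit : x 0 ^ 2 + ∑ i ∈ Finset.univ.erase 0, x i ^ 2 = ∑ i, x i ^ 2 :=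
    Finset.add_sum_erase _ (fun i : Fin (m + 1) => x i ^ 2) (Finset.mem_univ (0 : Fin (m + 1)))
  have hpos : (0:ℝ) ≤ ∑ i ∈ Finset.univ.erase (0 : Fin (m+1)), x i ^ 2 :=
    Finset.sum_nonneg fun i _ => by positivity
  have hx00 : 0 ≤ 1 - bb k := by linarith
  nlinarith

lemma box_subset_ball {k : ℕ} : box m k ⊆ ball (0 : EuclideanSpace ℝ (Fin (m + 1))) 1 := by
  intro x hx
  apply mem_ball_of_sumsq
  have h1 := (box_sumsq m hx).1
  have h2 := bb_pos k
  linarith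

lemma box_measurable (k : ℕ) : MeasurableSet (box m k) := by
  apply WithLp.measurable_ofLp
  apply MeasurableSet.univ_pi
  intro i
  unfold J
  split
  · exact measurableSet_Ico
  · exact measurableSet_Icc

lemma box_disjoint {k l : ℕ} (h : k ≠ l) : Disjoint (box m k) (box m l) := by
  have key : ∀ k l : ℕ, k < l → ∀ x, x ∈ box m k → x ∉ box m l := by
    intro k l hkl x hxk hxl
    rw [mem_box_iff] at hxk hxl
    have hb0 := bb_pos k
    have hm1 : (1 : ℝ) ≤ (m : ℝ) + 1 := by
      have := Nat.cast_nonneg (α := ℝ) m; linarith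
    have h1 : x 0 < 1 - bb k + bb k / (2 * (m + 1)) := hxk.1.2
    have h2 : 1 - bb l ≤ x 0 := hxl.1.1
    have h3 : bb l ≤ bb (k + 1) := bb_antitone hkl
    rw [bb_succ] at h3
    have hd : bb k / (2 * ((m:ℝ) + 1)) ≤ bb k / 2 := by
      apply div_le_div_of_nonneg_left hb0.le (by norm_num)
      linarith
    linarith
  rw [Set.disjoint_left]
  intro x hxk hxl
  rcases lt_or_gt_of_ne h with hlt | hgt
  · exact key _ _ hlt x hxk hxl
  · exact key _ _ hgt x hxl hxk

lemma box_subset_hull (k : ℕ) :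
    box m k ⊆ convexHull ℝ (Set.range (vtx m k)) := by
  intro x hx
  rw [mem_box_iff] at hx
  obtain ⟨⟨h0a, h0b⟩, h1⟩ := hx
  have hb0 := bb_pos k
  have hw := ww_pos k
  have hm1 : (0 : ℝ) < (m : ℝ) + 1 := by positivity
  set cs : Fin (m + 1) → ℝ := fun i =>
    if i = 0 then (x 0 - (1 - bb k)) / (bb k / 2) else x i / ww k with hcs
  have hcs0 : cs 0 = (x 0 - (1 - bb k)) / (bb k / 2) := by simp [hcs]
  have hcsj : ∀ i : Fin (m+1), i ≠ 0 → cs i = x i / ww k := by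
    intro i hi; simp [hcs, hi]
  have hcs_nonneg : ∀ i, 0 ≤ cs i := by
    intro i
    rcases eq_or_ne i 0 with rfl | hi
    · rw [hcs0]
      apply div_nonneg (by linarith) (by linarith)
    · rw [hcsj i hi]
      exact div_nonneg (h1 i hi).1 hw.le
  have hcs_le : ∀ i, cs i ≤ 1 / (m + 1) := by
    intro i
    rcases eq_or_ne i 0 with rfl | hi
    · rw [hcs0, div_le_div_iff₀ (by linarith) hm1]
      have h2 : x 0 - (1 - bb k) < bb k / (2 * ((m:ℝ)+1)) := by linarith
      have h3 : bb k / (2*((m:ℝ)+1)) * ((m:ℝ)+1) = bb k / 2 := by field_simp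
      have h4 := mul_le_mul_of_nonneg_right h2.le hm1.le
      linarith
    · rw [hcsj i hi, div_le_div_iff₀ hw hm1]
      have h2 := (h1 i hi).2
      have h3 : ww k / ((m:ℝ)+1) * ((m:ℝ)+1) = ww k := by field_simp
      have h4 := mul_le_mul_of_nonneg_right h2 hm1.le
      linarith
  have hsum_le : ∑ i, cs i ≤ 1 := by
    calc ∑ i, cs i ≤ ∑ _i : Fin (m+1), 1 / ((m:ℝ)+1) := Finset.sum_le_sum fun i _ => hcs_le i
      _ = 1 := by
          rw [Finset.sum_const, Finset.card_univ, Fintype.card_fin, nsmul_eq_mul]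
          push_cast
          field_simp
  set cw : Option (Fin (m + 1)) → ℝ := fun o => o.elim (1 - ∑ i, cs i) cs with hcw
  have hcw_nonneg : ∀ o ∈ (Finset.univ : Finset (Option (Fin (m+1)))), 0 ≤ cw o := by
    rintro (_ | i) _
    · simp only [hcw, Option.elim]; linarith
    · exact hcs_nonneg i
  have hcw_sum : ∑ o, cw o = 1 := by
    rw [Fintype.sum_option]
    simp only [hcw, Option.elim]
    ring
  have hmem : ∑ o, cw o • vtx m k o ∈ convexHull ℝ (Set.range (vtx m k)) := by
    apply (convex_convexHull ℝ _).sum_mem hcw_nonneg hcw_sum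
    intro o _
    exact subset_convexHull ℝ _ (Set.mem_range_self o)
  have hxeq : x = ∑ o, cw o • vtx m k o := by
    ext j
    have happ : (∑ o, cw o • vtx m k o) j = ∑ o, cw o * (vtx m k o) j := by
      rw [WithLp.ofLp_sum, Finset.sum_apply]
      rfl
    rw [happ, Fintype.sum_option]
    have hnone : (vtx m k none) j = if j = 0 then 1 - bb k else 0 := by
      simp [vtx, EuclideanSpace.single_apply]
    have hsome : ∀ i, (vtx m k (some i)) j =
        (if j = 0 then 1 - bb k else 0) + (if j = i then dd m k i else 0) := by
      intro i
      simp [vtx, PiLp.add_apply, EuclideanSpace.single_apply]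
    simp only [hnone, hsome]
    have hcwn : cw none = 1 - ∑ i, cs i := rfl
    have hcws : ∀ i, cw (some i) = cs i := fun i => rfl
    simp only [hcwn, hcws]
    have hexpand : ∑ i, cs i * ((if j = 0 then 1 - bb k else 0) + (if j = i then dd m k i else 0))
        = (∑ i, cs i) * (if j = 0 then 1 - bb k else 0) + cs j * dd m k j := by
      rw [Finset.sum_congr rfl (fun i (_ : i ∈ Finset.univ) => mul_add (cs i)
        (if j = 0 then 1 - bb k else 0) (if j = i then dd m k i else 0)),
        Finset.sum_add_distrib]
      congr 1
      · rw [← Finset.sum_mul]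
      · have h : ∀ i ∈ Finset.univ, cs i * (if j = i then dd m k i else 0) =
            if j = i then cs i * dd m k i else 0 := by
          intro i _
          split <;> simp
        rw [Finset.sum_congr rfl h, Finset.sum_ite_eq Finset.univ j]
        simp
    rw [hexpand]
    rcases eq_or_ne j 0 with rfl | hj
    · simp only [if_pos rfl]
      have hdd : dd m k 0 = bb k / 2 := by simp [dd]
      rw [hdd, hcs0]
      field_simp
      simp
      ring
    · simp only [if_neg hj]
      have hdd : dd m k j = ww k := by simp [dd, hj]
      rw [hdd, hcsj j hj]
      field_simp
      ring
  rw [hxeq]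
  exact hmem

lemma box_volume (k : ℕ) :
    volume (box m k) =
      ENNReal.ofReal ((bb k / (2 * (m + 1))) * (ww k / (m + 1)) ^ m) := by
  have hmeas : ∀ i, MeasurableSet (J m k i) := by
    intro i; unfold J; split
    · exact measurableSet_Ico
    · exact measurableSet_Icc
  have h1 := (PiLp.volume_preserving_ofLp (Fin (m+1))).measure_preimage
    (MeasurableSet.univ_pi hmeas).nullMeasurableSet
  have h2 : volume (box m k) = ∏ i, volume (J m k i) := by
    rw [← volume_pi_pi (J m k)]
    exact h1
  rw [h2]
  have hvol : ∀ i : Fin (m+1), volume (J m k i) =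
      if i = 0 then ENNReal.ofReal (bb k / (2 * (m + 1)))
      else ENNReal.ofReal (ww k / (m + 1)) := by
    intro i
    unfold J
    rcases eq_or_ne i 0 with rfl | hi
    · rw [if_pos rfl, if_pos rfl, Real.volume_Ico]
      congr 1
      ring
    · rw [if_neg hi, if_neg hi, Real.volume_Icc]
      congr 1
      ring
  rw [Finset.prod_congr rfl (fun i _ => hvol i)]
  rw [← Finset.mul_prod_erase _ _ (Finset.mem_univ (0 : Fin (m+1)))]
  rw [if_pos rfl]
  have hrest : ∏ i ∈ Finset.univ.erase (0 : Fin (m+1)),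
      (if i = 0 then ENNReal.ofReal (bb k / (2 * (m + 1)))
        else ENNReal.ofReal (ww k / (m + 1))) = ENNReal.ofReal (ww k / (m + 1)) ^ m := by
    rw [Finset.prod_congr rfl (fun i hi => if_neg (Finset.mem_erase.mp hi).1),
      Finset.prod_const, Finset.card_erase_of_mem (Finset.mem_univ _), Finset.card_univ,
      Fintype.card_fin, Nat.add_sub_cancel]
  rw [hrest]
  have hwn : (0:ℝ) ≤ ww k / (m + 1) := div_nonneg (ww_pos k).le (by positivity)
  have hbn : (0:ℝ) ≤ bb k / (2 * (m + 1)) := div_nonneg (bb_pos k).le (by positivity)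
  rw [← ENNReal.ofReal_pow hwn, ← ENNReal.ofReal_mul hbn]

/-- lower bound for the hyperbolic volume of a measurable subset of the ball with a
pointwise lower bound on the density. -/
lemma hypVol_ge (n : ℕ) {S : Set (EuclideanSpace ℝ (Fin n))} (hS : MeasurableSet S)
    (hSb : S ⊆ ball 0 1) {ρ : ℝ}
    (h : ∀ x ∈ S, ρ ≤ (1 - ‖x‖ ^ 2) ^ (-((n : ℝ) + 1) / 2)) :
    ENNReal.ofReal ρ * volume S ≤ hypVol n S := by
  rw [hypVol, withDensity_apply _ hS, Measure.restrict_restrict hS,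
    inter_eq_self_of_subset_left hSb]
  calc ENNReal.ofReal ρ * volume S = ∫⁻ _ in S, ENNReal.ofReal ρ ∂volume := by
        rw [setLIntegral_const]
    _ ≤ ∫⁻ x in S, ENNReal.ofReal ((1 - ‖x‖ ^ 2) ^ (-((n : ℝ) + 1) / 2)) ∂volume :=
        setLIntegral_mono' hS fun x hx => ENNReal.ofReal_le_ofReal (h x hx)

/-- the uniform lower bound for the hyperbolic volume of each box -/
noncomputable def vv : ℝ :=
  (2 : ℝ) ^ (-(((m + 1 : ℕ) : ℝ) + 1) / 2) / (2 * (m + 1)) ^ (m + 1)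

lemma vv_pos : 0 < vv m := by
  unfold vv
  have h1 : (0:ℝ) < (2 : ℝ) ^ (-(((m + 1 : ℕ) : ℝ) + 1) / 2) :=
    Real.rpow_pos_of_pos (by norm_num) _
  have h2 : (0:ℝ) < (2 * ((m:ℝ) + 1)) ^ (m + 1) := by positivity
  positivity

lemma hypVol_box_ge (k : ℕ) :
    ENNReal.ofReal (vv m) ≤ hypVol (m + 1) (box m k) := by
  have hb0 := bb_pos k
  have hb1 := bb_le_one k
  have hrneg : -(((m + 1 : ℕ) : ℝ) + 1) / 2 ≤ 0 := by
    have h : (0:ℝ) ≤ ((m + 1 : ℕ) : ℝ) + 1 := by positivity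
    linarith
  have hρpos : 0 < (2 * bb k) ^ (-(((m + 1 : ℕ) : ℝ) + 1) / 2) :=
    Real.rpow_pos_of_pos (by linarith) _
  have hbound : ∀ x ∈ box m k, (2 * bb k) ^ (-(((m + 1 : ℕ) : ℝ) + 1) / 2)
      ≤ (1 - ‖x‖ ^ 2) ^ (-(((m + 1 : ℕ) : ℝ) + 1) / 2) := by
    intro x hx
    obtain ⟨hs1, hs2⟩ := box_sumsq m hx
    rw [normsq m x]
    have hpos : 0 < 1 - ∑ i, x i ^ 2 := by linarith
    have hle : 1 - ∑ i, x i ^ 2 ≤ 2 * bb k := by nlinarith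
    exact Real.rpow_le_rpow_of_nonpos hpos hle hrneg
  have hstep := hypVol_ge (m + 1) (box_measurable m k) (box_subset_ball m) hbound
  refine le_trans ?_ hstep
  rw [box_volume, ← ENNReal.ofReal_mul hρpos.le]
  apply ENNReal.ofReal_le_ofReal
  apply le_of_eq
  obtain ⟨s, hsdef⟩ : ∃ s, s = Real.sqrt (bb k) := ⟨_, rfl⟩
  have hs : 0 < s := hsdef ▸ Real.sqrt_pos.mpr hb0
  have hs2 : s ^ 2 = bb k := hsdef ▸ Real.sq_sqrt hb0.le
  have hwk : ww k = s / 2 := by rw [hsdef]; rfl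
  obtain ⟨r, hr⟩ : ∃ r : ℝ, r = -(((m + 1 : ℕ) : ℝ) + 1) / 2 := ⟨_, rfl⟩
  unfold vv
  rw [← hr, ← hs2, hwk]
  have hsplit : (2 * s ^ 2) ^ r = 2 ^ r * (s ^ 2) ^ r :=
    Real.mul_rpow (by norm_num) (by positivity)
  have hs2r : (s ^ 2) ^ r = (s ^ (m + 2) : ℝ)⁻¹ := by
    rw [← Real.rpow_natCast s 2, ← Real.rpow_mul hs.le, ← Real.rpow_natCast s (m + 2),
      ← Real.rpow_neg hs.le]
    congr 1
    rw [hr]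
    push_cast
    ring
  rw [hsplit, hs2r]
  have hm1 : ((m:ℝ) + 1) ≠ 0 := by positivity
  have hs0 : s ≠ 0 := ne_of_gt hs
  field_simp
  have key : ((2 + (m:ℝ) * 2)⁻¹) ^ m * (2 + (m:ℝ) * 2) ^ m = 1 := by
    rw [← mul_pow, inv_mul_cancel₀ (by positivity), one_pow]
  linear_combination (-2 * ((m:ℝ) * s ^ 2 * s ^ m + s ^ 2 * s ^ m)) * key

lemma exists_range_eq {α : Type*} (T : Finset α) (hT : T.Nonempty) {N : ℕ} (h : T.card ≤ N) :
    ∃ x : Fin N → α, Set.range x = ↑T := by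
  have hpos : 0 < T.card := Finset.card_pos.mpr hT
  have e : Fin T.card ≃ {a // a ∈ T} := (Fintype.equivFinOfCardEq (Fintype.card_coe T)).symm
  refine ⟨fun i => (e ⟨i.1 % T.card, Nat.mod_lt _ hpos⟩ : {a // a ∈ T}), ?_⟩
  apply Set.eq_of_subset_of_subset
  · rintro y ⟨i, rfl⟩
    exact (e _).2
  · intro a ha
    refine ⟨⟨(e.symm ⟨a, ha⟩ : Fin T.card).1, lt_of_lt_of_le (e.symm ⟨a, ha⟩).2 h⟩, ?_⟩
    have hmod : ((e.symm ⟨a, ha⟩ : Fin T.card).1 % T.card) = (e.symm ⟨a, ha⟩ : Fin T.card).1 :=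
      Nat.mod_eq_of_lt (e.symm ⟨a, ha⟩).2
    have hfin : (⟨(e.symm ⟨a, ha⟩ : Fin T.card).1 % T.card, Nat.mod_lt _ hpos⟩ : Fin T.card) =
        e.symm ⟨a, ha⟩ := Fin.ext hmod
    show ((e ⟨(e.symm ⟨a, ha⟩ : Fin T.card).1 % T.card, Nat.mod_lt _ hpos⟩ : {a // a ∈ T}) : α) = a
    rw [hfin, Equiv.apply_symm_apply]

end HypAux

theorem exists_polytope_volume_gt_linear (n : ℕ) (hn : 1 ≤ n) :
    ∃ c : ℝ, 0 < c ∧ ∀ N : ℕ, n + 1 ≤ N →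
      ∃ x : Fin N → EuclideanSpace ℝ (Fin n),
        (∀ i, x i ∈ ball (0 : EuclideanSpace ℝ (Fin n)) 1) ∧
        ENNReal.ofReal (c * N) < hypVol n (convexHull ℝ (Set.range x)) := by
  obtain ⟨m, rfl⟩ : ∃ m, n = m + 1 := ⟨n - 1, by omega⟩
  clear hn
  classical
  have hv := HypAux.vv_pos m
  refine ⟨HypAux.vv m / (2 * (m + 2)), by positivity, ?_⟩
  intro N hN
  set M := N / (m + 2) with hMdef
  have hM1 : 1 ≤ M := (Nat.one_le_div_iff (by omega)).mpr (by omega)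
  -- the point set
  obtain ⟨T, hT⟩ : ∃ T : Finset (EuclideanSpace ℝ (Fin (m + 1))),
      T = Finset.image (fun p : Fin M × Option (Fin (m + 1)) => HypAux.vtx m p.1 p.2)
        Finset.univ := ⟨_, rfl⟩
  have hMN : M * (m + 2) ≤ N := hMdef ▸ Nat.div_mul_le_self N (m + 2)
  have hTcard : T.card ≤ N := by
    rw [hT]
    refine le_trans Finset.card_image_le (le_trans (le_of_eq ?_) hMN)
    simp [Finset.card_univ]
  have hTne : T.Nonempty := by
    rw [hT]
    exact ⟨HypAux.vtx m 0 none, Finset.mem_image.mpr ⟨(⟨0, hM1⟩, none), Finset.mem_univ _, rfl⟩⟩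
  obtain ⟨x, hx⟩ := HypAux.exists_range_eq T hTne hTcard
  refine ⟨x, ?_, ?_⟩
  · intro i
    have hmem : x i ∈ (T : Set (EuclideanSpace ℝ (Fin (m + 1)))) := hx ▸ Set.mem_range_self i
    rw [Finset.mem_coe, hT, Finset.mem_image] at hmem
    obtain ⟨p, _, hp⟩ := hmem
    rw [← hp]
    exact HypAux.vtx_mem_ball m p.2
  · -- volume estimate
    have hhull : ∀ k, k < M → HypAux.box m k ⊆ convexHull ℝ (Set.range x) := by
      intro k hk
      refine (HypAux.box_subset_hull m k).trans (convexHull_mono ?_)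
      rintro y ⟨o, rfl⟩
      rw [hx, Finset.mem_coe, hT, Finset.mem_image]
      exact ⟨(⟨k, hk⟩, o), Finset.mem_univ _, rfl⟩
    have hUsub : (⋃ k ∈ Finset.range M, HypAux.box m k) ⊆ convexHull ℝ (Set.range x) :=
      Set.iUnion₂_subset fun k hk => hhull k (Finset.mem_range.mp hk)
    have hdisj : ((Finset.range M : Finset ℕ) : Set ℕ).PairwiseDisjoint (HypAux.box m) :=
      fun k _ l _ hkl => HypAux.box_disjoint m hkl
    have hsum : hypVol (m + 1) (⋃ k ∈ Finset.range M, HypAux.box m k)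
        = ∑ k ∈ Finset.range M, hypVol (m + 1) (HypAux.box m k) :=
      measure_biUnion_finset hdisj fun k _ => HypAux.box_measurable m k
    have hlow : ENNReal.ofReal ((M : ℝ) * HypAux.vv m)
        ≤ ∑ k ∈ Finset.range M, hypVol (m + 1) (HypAux.box m k) := by
      calc ENNReal.ofReal ((M : ℝ) * HypAux.vv m)
          = (M : ENNReal) * ENNReal.ofReal (HypAux.vv m) := by
            rw [ENNReal.ofReal_mul (by positivity), ENNReal.ofReal_natCast]
        _ = ∑ _k ∈ Finset.range M, ENNReal.ofReal (HypAux.vv m) := by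
            rw [Finset.sum_const, Finset.card_range, nsmul_eq_mul]
        _ ≤ ∑ k ∈ Finset.range M, hypVol (m + 1) (HypAux.box m k) :=
            Finset.sum_le_sum fun k _ => HypAux.hypVol_box_ge m k
    have hstrict : ENNReal.ofReal (HypAux.vv m / (2 * (m + 2)) * N)
        < ENNReal.ofReal ((M : ℝ) * HypAux.vv m) := by
      rw [ENNReal.ofReal_lt_ofReal_iff (mul_pos (by exact_mod_cast hM1 : (0:ℝ) < (M:ℝ)) hv)]
      have hNlt : (N : ℝ) < 2 * M * (m + 2) := by
        have h1 := Nat.div_add_mod N (m + 2)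
        have h2 : N % (m + 2) < m + 2 := Nat.mod_lt N (by omega)
        have h3 : (m + 2) * 1 ≤ (m + 2) * M := Nat.mul_le_mul_left _ hM1
        have h4 : N < 2 * M * (m + 2) := by
          calc N = (m + 2) * M + N % (m + 2) := by rw [← hMdef] at h1; omega
            _ < (m + 2) * M + (m + 2) := by omega
            _ ≤ (m + 2) * M + (m + 2) * M := by omega
            _ = 2 * M * (m + 2) := by ring
        exact_mod_cast h4
      rw [div_mul_eq_mul_div, div_lt_iff₀ (by positivity)]
      calc HypAux.vv m * N < HypAux.vv m * (2 * M * (m + 2)) :=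
            mul_lt_mul_of_pos_left hNlt hv
        _ = (M : ℝ) * HypAux.vv m * (2 * (m + 2)) := by push_cast; ring
    calc ENNReal.ofReal (HypAux.vv m / (2 * (m + 2)) * N)
        < ENNReal.ofReal ((M : ℝ) * HypAux.vv m) := hstrict
      _ ≤ ∑ k ∈ Finset.range M, hypVol (m + 1) (HypAux.box m k) := hlow
      _ = hypVol (m + 1) (⋃ k ∈ Finset.range M, HypAux.box m k) := hsum.symm
      _ ≤ hypVol (m + 1) (convexHull ℝ (Set.range x)) := measure_mono hUsub
end
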